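/- Let d ≥ 2 be an even integer and let π* be the partition of {1,…,3d} into the three consecutive intervals {1,…,d}, {d+1,…,2d}, {2d+1,…,3d}. Then the number of non-crossing partitions of {1,…,3d} that respect π* and have no singleton blocks equals the number of non-crossing pairings of {1,…,3d} that respect π*. -/

import Mathlib

noncomputable section

/-- `C` is a partition of the set `S ⊆ ℕ`: its blocks are nonempty subsets of `S` and
every element of `S` belongs to exactly one block. -/
def IsPartitionOn (S : Set ℕ) (C : Set (Set ℕ)) : Prop :=
  (∀ B ∈ C, B ⊆ S ∧ B.Nonempty) ∧ ∀ x ∈ S, ∃! B, B ∈ C ∧ x ∈ B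

/-- A partition is non-crossing if there are no `i < j < k < l` with `i, k` in one block
and `j, l` in a different block. -/
def NonCrossingOn (C : Set (Set ℕ)) : Prop :=
  ¬ ∃ i j k l : ℕ, i < j ∧ j < k ∧ k < l ∧
      ∃ B ∈ C, ∃ B' ∈ C, B ≠ B' ∧ i ∈ B ∧ k ∈ B ∧ j ∈ B' ∧ l ∈ B'

/-- The blocks of the interval partition `π⋆` of `{1,…,3d}` into three consecutive
intervals of length `d`. -/
def piStar3 (d : ℕ) : Set (Set ℕ) :=
  {B | ∃ k : ℕ, k < 3 ∧ B = Set.Icc (k * d + 1) ((k + 1) * d)}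

/-- `C` respects `π⋆`: every block of `C` contains at most one element from each block of
`π⋆`. -/
def RespectsPiStar3 (d : ℕ) (C : Set (Set ℕ)) : Prop :=
  ∀ B ∈ C, ∀ c ∈ piStar3 d, (B ∩ c).Subsingleton

/-- Two distinct blocks of a partition are disjoint. -/
lemma blocks_disjoint {S : Set ℕ} {C : Set (Set ℕ)} (hpart : IsPartitionOn S C)
    {B B' : Set ℕ} (hB : B ∈ C) (hB' : B' ∈ C) (hne : B ≠ B') {z : ℕ}
    (hz : z ∈ B) (hz' : z ∈ B') : False := by
  obtain ⟨B'', ⟨_, _⟩, huniq⟩ := hpart.2 z ((hpart.1 B hB).1 hz)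
  exact hne ((huniq B ⟨hB, hz⟩).trans (huniq B' ⟨hB', hz'⟩).symm)

/-- Removing a block from a partition yields a partition of the complement. -/
lemma partition_diff {S : Set ℕ} {C : Set (Set ℕ)} (hpart : IsPartitionOn S C)
    {B : Set ℕ} (hB : B ∈ C) : IsPartitionOn (S \ B) (C \ {B}) := by
  constructor
  · rintro B' ⟨hB'C, hB'ne⟩
    rw [Set.mem_singleton_iff] at hB'ne
    refine ⟨fun z hz => ⟨(hpart.1 B' hB'C).1 hz, fun hzB =>
      blocks_disjoint hpart hB'C hB hB'ne hz hzB⟩, (hpart.1 B' hB'C).2⟩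
  · rintro z ⟨hzS, hzB⟩
    obtain ⟨B', ⟨hB'C, hzB'⟩, huniq⟩ := hpart.2 z hzS
    refine ⟨B', ⟨⟨hB'C, fun h => hzB (Set.mem_singleton_iff.mp h ▸ hzB')⟩, hzB'⟩, ?_⟩
    rintro B'' ⟨⟨hB''C, _⟩, hzB''⟩
    exact huniq B'' ⟨hB''C, hzB''⟩

/-- Parity: a finite set partitioned into blocks of size 2 has even cardinality. -/
lemma even_ncard_of_pair_partition :
    ∀ n : ℕ, ∀ S : Set ℕ, S.Finite → S.ncard = n → ∀ C : Set (Set ℕ),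
      IsPartitionOn S C → (∀ B ∈ C, B.ncard = 2) → Even n := by
  intro n
  induction n using Nat.strong_induction_on with
  | _ n ih =>
    intro S hSfin hSn C hpart h2
    rcases S.eq_empty_or_nonempty with hS | ⟨x, hx⟩
    · subst hS; simp only [Set.ncard_empty] at hSn; exact hSn ▸ Even.zero
    · obtain ⟨B, ⟨hBC, hxB⟩, huniq⟩ := hpart.2 x hx
      have hBS : B ⊆ S := (hpart.1 B hBC).1
      have hB2 : B.ncard = 2 := h2 B hBC
      have hn2 : 2 ≤ n := by
        rw [← hSn, ← hB2]; exact Set.ncard_le_ncard hBS hSfin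
      have hdiff : (S \ B).ncard = n - 2 := by
        rw [Set.ncard_diff hBS (hSfin.subset hBS), hSn, hB2]
      have := ih (n - 2) (by omega) (S \ B) hSfin.diff hdiff (C \ {B})
        (partition_diff hpart hBC) (fun B' hB' => h2 B' hB'.1)
      rw [Nat.even_iff] at this ⊢
      omega

/-- Decomposition of a block into its intersections with the three intervals. -/
lemma block_decomp {d : ℕ} {B : Set ℕ} (hBS : B ⊆ Set.Icc 1 (3 * d)) :
    B = (B ∩ Set.Icc (0 * d + 1) ((0 + 1) * d)) ∪
        (B ∩ Set.Icc (1 * d + 1) ((1 + 1) * d)) ∪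
        (B ∩ Set.Icc (2 * d + 1) ((2 + 1) * d)) := by
  ext z
  simp only [Set.mem_union, Set.mem_inter_iff, Set.mem_Icc]
  constructor
  · intro hz
    have hm := hBS hz
    rw [Set.mem_Icc] at hm
    have : (0 * d + 1 ≤ z ∧ z ≤ (0 + 1) * d) ∨ (1 * d + 1 ≤ z ∧ z ≤ (1 + 1) * d) ∨
        (2 * d + 1 ≤ z ∧ z ≤ (2 + 1) * d) := by omega
    tauto
  · rintro ((⟨h, _⟩ | ⟨h, _⟩) | ⟨h, _⟩) <;> exact h

/-- If a block of size ≥ 3 respects `π⋆`, it has one element in each interval. -/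
lemma block_triple {d : ℕ} {B : Set ℕ} (hBS : B ⊆ Set.Icc 1 (3 * d))
    (hfin : B.Finite)
    (hsub : ∀ k, k < 3 → (B ∩ Set.Icc (k * d + 1) ((k + 1) * d)).Subsingleton)
    (h3 : 3 ≤ B.ncard) :
    ∃ a0 a1 a2, a0 ∈ B ∧ a1 ∈ B ∧ a2 ∈ B ∧
      1 ≤ a0 ∧ a0 ≤ d ∧ d + 1 ≤ a1 ∧ a1 ≤ 2 * d ∧ 2 * d + 1 ≤ a2 ∧ a2 ≤ 3 * d := by
  have hcard : ∀ k, k < 3 → (B ∩ Set.Icc (k * d + 1) ((k + 1) * d)).ncard ≤ 1 := by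
    intro k hk
    exact (Set.ncard_le_one ((hsub k hk).finite)).mpr (fun a ha b hb => hsub k hk ha hb)
  have hnonempty : ∀ k, k < 3 → (B ∩ Set.Icc (k * d + 1) ((k + 1) * d)).Nonempty := by
    intro k hk
    by_contra hemp
    rw [Set.not_nonempty_iff_eq_empty] at hemp
    have h0 := hcard 0 (by norm_num)
    have h1 := hcard 1 (by norm_num)
    have h2 := hcard 2 (by norm_num)
    have hub : B.ncard ≤ (B ∩ Set.Icc (0 * d + 1) ((0 + 1) * d)).ncard +
        (B ∩ Set.Icc (1 * d + 1) ((1 + 1) * d)).ncard +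
        (B ∩ Set.Icc (2 * d + 1) ((2 + 1) * d)).ncard := by
      conv_lhs => rw [block_decomp hBS]
      exact le_trans (Set.ncard_union_le _ _) (by gcongr; exact Set.ncard_union_le _ _)
    interval_cases k <;> (rw [hemp, Set.ncard_empty] at hub; omega)
  obtain ⟨a0, ha0B, ha0I⟩ := hnonempty 0 (by norm_num)
  obtain ⟨a1, ha1B, ha1I⟩ := hnonempty 1 (by norm_num)
  obtain ⟨a2, ha2B, ha2I⟩ := hnonempty 2 (by norm_num)
  rw [Set.mem_Icc] at ha0I ha1I ha2I
  exact ⟨a0, a1, a2, ha0B, ha1B, ha2B, by omega, by omega, by omega, by omega,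
    by omega, by omega⟩

/-- Every block of a non-crossing, `π⋆`-respecting, singleton-free partition of
`{1,…,3d}` (with `d` even) is a pair. -/
theorem no_triple_aux {d : ℕ} (hd : 2 ≤ d) (heven : Even d) {C : Set (Set ℕ)}
    (hpart : IsPartitionOn (Set.Icc 1 (3 * d)) C) (hnc : NonCrossingOn C)
    (hresp : RespectsPiStar3 d C) (hns : ∀ B ∈ C, B.ncard ≠ 1) :
    ∀ B ∈ C, B.ncard = 2 := by
  have hSfin : (Set.Icc 1 (3 * d)).Finite := Set.finite_Icc _ _
  have hI : ∀ k : ℕ, k < 3 → Set.Icc (k * d + 1) ((k + 1) * d) ∈ piStar3 d :=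
    fun k hk => ⟨k, hk, rfl⟩
  have hsubs : ∀ B ∈ C, ∀ k, k < 3 →
      (B ∩ Set.Icc (k * d + 1) ((k + 1) * d)).Subsingleton :=
    fun B hB k hk => hresp B hB _ (hI k hk)
  -- every block has size 2 or 3
  have hblock : ∀ B ∈ C, B.ncard = 2 ∨ B.ncard = 3 := by
    intro B hBC
    have hBS : B ⊆ Set.Icc 1 (3 * d) := (hpart.1 B hBC).1
    have hBfin : B.Finite := hSfin.subset hBS
    have hcard : ∀ k, k < 3 → (B ∩ Set.Icc (k * d + 1) ((k + 1) * d)).ncard ≤ 1 := by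
      intro k hk
      exact (Set.ncard_le_one ((hsubs B hBC k hk).finite)).mpr
        (fun a ha b hb => hsubs B hBC k hk ha hb)
    have hle3 : B.ncard ≤ 3 := by
      have hub : B.ncard ≤ (B ∩ Set.Icc (0 * d + 1) ((0 + 1) * d)).ncard +
          (B ∩ Set.Icc (1 * d + 1) ((1 + 1) * d)).ncard +
          (B ∩ Set.Icc (2 * d + 1) ((2 + 1) * d)).ncard := by
        conv_lhs => rw [block_decomp hBS]
        exact le_trans (Set.ncard_union_le _ _) (by gcongr; exact Set.ncard_union_le _ _)
      have h0 := hcard 0 (by norm_num)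
      have h1 := hcard 1 (by norm_num)
      have h2 := hcard 2 (by norm_num)
      omega
    have hne0 : B.ncard ≠ 0 := by
      have := (hpart.1 B hBC).2
      simpa [Set.ncard_eq_zero hBfin] using this.ne_empty
    have hne1 : B.ncard ≠ 1 := hns B hBC
    omega
  intro B hBC
  rcases hblock B hBC with h2 | h3
  · exact h2
  exfalso
  have hBS : B ⊆ Set.Icc 1 (3 * d) := (hpart.1 B hBC).1
  have hBfin : B.Finite := hSfin.subset hBS
  obtain ⟨a0, a1, a2, ha0, ha1, ha2, h01, h0d, h1l, h1u, h2l, h2u⟩ :=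
    block_triple hBS hBfin (hsubs B hBC) (by omega)
  -- every other block is a pair
  have hothers : ∀ B' ∈ C \ {B}, B'.ncard = 2 := by
    rintro B' ⟨hB'C, hB'ne⟩
    rw [Set.mem_singleton_iff] at hB'ne
    rcases hblock B' hB'C with h2' | h3'
    · exact h2'
    exfalso
    obtain ⟨b0, b1, b2, hb0, hb1, hb2, g01, g0d, g1l, g1u, g2l, g2u⟩ :=
      block_triple (hpart.1 B' hB'C).1 (hSfin.subset (hpart.1 B' hB'C).1)
        (hsubs B' hB'C) (by omega)
    have hne : a1 ≠ b1 := fun h =>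
      blocks_disjoint hpart hBC hB'C (Ne.symm hB'ne) ha1 (h ▸ hb1)
    rcases lt_or_gt_of_ne hne with hlt | hgt
    · -- b0 < a1 < b1 < a2 : b0,b1 ∈ B', a1,a2 ∈ B
      exact hnc ⟨b0, a1, b1, a2, by omega, hlt, by omega,
        B', hB'C, B, hBC, hB'ne, hb0, hb1, ha1, ha2⟩
    · -- a0 < b1 < a1 < b2 : a0,a1 ∈ B, b1,b2 ∈ B'
      exact hnc ⟨a0, b1, a1, b2, by omega, hgt, by omega,
        B, hBC, B', hB'C, Ne.symm hB'ne, ha0, ha1, hb1, hb2⟩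
  -- parity contradiction
  have heven' : Even ((Set.Icc 1 (3 * d) \ B).ncard) :=
    even_ncard_of_pair_partition _ _ hSfin.diff rfl _ (partition_diff hpart hBC) hothers
  have hScard : (Set.Icc 1 (3 * d)).ncard = 3 * d := by
    rw [← Finset.coe_Icc, Set.ncard_coe_finset, Nat.card_Icc]; omega
  have hdiff : (Set.Icc 1 (3 * d) \ B).ncard = 3 * d - 3 := by
    rw [Set.ncard_diff hBS hBfin, hScard, h3]
  rw [hdiff] at heven'
  obtain ⟨m, rfl⟩ := heven
  rw [Nat.even_iff] at heven'
  omega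

/-- for even `d`, the number of non-crossing partitions of `{1,…,3d}`
respecting `π⋆` with no singleton blocks equals the number of non-crossing pairings of
`{1,…,3d}` respecting `π⋆`. -/
theorem card_nc_no_singleton_eq_card_nc_pairings (d : ℕ) (hd : 2 ≤ d) (heven : Even d) :
    {C : Set (Set ℕ) | IsPartitionOn (Set.Icc 1 (3 * d)) C ∧ NonCrossingOn C ∧
        RespectsPiStar3 d C ∧ ∀ B ∈ C, B.ncard ≠ 1}.ncard =
    {C : Set (Set ℕ) | IsPartitionOn (Set.Icc 1 (3 * d)) C ∧ NonCrossingOn C ∧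
        RespectsPiStar3 d C ∧ ∀ B ∈ C, B.ncard = 2}.ncard := by
  congr 1
  ext C
  simp only [Set.mem_setOf_eq]
  constructor
  · rintro ⟨h1, h2, h3, h4⟩
    exact ⟨h1, h2, h3, no_triple_aux hd heven h1 h2 h3 h4⟩
  · rintro ⟨h1, h2, h3, h4⟩
    exact ⟨h1, h2, h3, fun B hB => by rw [h4 B hB]; omega⟩
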